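/- For three i.i.d. uniform random variables a_1, a_2, a_3 on [0,1] and nonincreasing decision numbers 1 ≥ k_1 ≥ k_2 ≥ 0, the probability of winning at round 2, i.e. P(a_1 < k_1, a_1 not maximum, a_2 ≥ k_2, a_2 = max(a_1,a_2,a_3)), equals k_1/2 - k_1^3/6 - k_2^3/3. -/

import Mathlib

open MeasureTheory

private lemma lint_ofReal_Ioc (a b : ℝ) (hab : a ≤ b) (f : ℝ → ℝ) (hf : Continuous f)
    (hpos : ∀ y ∈ Set.Ioc a b, 0 ≤ f y) :
    ∫⁻ y in Set.Ioc a b, ENNReal.ofReal (f y) = ENNReal.ofReal (∫ y in a..b, f y) := by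
  rw [intervalIntegral.integral_of_le hab,
    ← ofReal_integral_eq_lintegral_ofReal (hf.integrableOn_Ioc)
      ((ae_restrict_iff' measurableSet_Ioc).2 (ae_of_all _ hpos))]

private lemma real_integral_calc (k₁ k₂ : ℝ) (h0 : 0 ≤ k₂) (h21 : k₂ ≤ k₁) :
    ∫ x in (0:ℝ)..k₁, (1 - (max x k₂)^2)/2 = k₁ / 2 - k₁ ^ 3 / 6 - k₂ ^ 3 / 3 := by
  have hcont : Continuous fun x : ℝ => (1 - (max x k₂)^2)/2 := by continuity
  have hsplit := intervalIntegral.integral_add_adjacent_intervals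
    (μ := volume) (a := (0:ℝ)) (b := k₂) (c := k₁)
    (hcont.intervalIntegrable _ _) (hcont.intervalIntegrable _ _)
  rw [← hsplit]
  have e1 : ∫ x in (0:ℝ)..k₂, (1 - (max x k₂)^2)/2 = ∫ x in (0:ℝ)..k₂, (1 - k₂^2)/2 := by
    apply intervalIntegral.integral_congr
    intro x hx
    rw [Set.uIcc_of_le h0] at hx
    show (1 - (max x k₂)^2)/2 = (1 - k₂^2)/2
    rw [max_eq_right hx.2]
  have e2 : ∫ x in k₂..k₁, (1 - (max x k₂)^2)/2 = ∫ x in k₂..k₁, (1 - x^2)/2 := by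
    apply intervalIntegral.integral_congr
    intro x hx
    rw [Set.uIcc_of_le h21] at hx
    show (1 - (max x k₂)^2)/2 = (1 - x^2)/2
    rw [max_eq_left hx.1]
  rw [e1, e2]
  have e3 : ∀ c d : ℝ, ∫ x in c..d, (1 - x^2)/2 = ∫ x in c..d, (1/2 - x^2/2) := by
    intro c d; congr 1; funext x; ring
  rw [intervalIntegral.integral_const, e3]
  rw [intervalIntegral.integral_sub (by apply Continuous.intervalIntegrable; continuity)
      (by apply Continuous.intervalIntegrable; continuity)]
  rw [intervalIntegral.integral_div, intervalIntegral.integral_const,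
    intervalIntegral.integral_div, integral_pow]
  simp only [smul_eq_mul]
  ring

/-- For three i.i.d. uniform draws on `[0,1]` and nonincreasing decision numbers
`1 ≥ k₁ ≥ k₂ ≥ 0`, the probability of winning at round 2, i.e. `a₁ < k₁`,
`a₁ < max(a₂,a₃)`, `a₂ ≥ k₂` and `a₂ = max(a₁,a₂,a₃)`, equals
`k₁/2 - k₁³/6 - k₂³/3`. -/
theorem n_three_win_round_two (k₁ k₂ : ℝ) (h0 : 0 ≤ k₂) (h21 : k₂ ≤ k₁) (h1 : k₁ ≤ 1) :
    (Measure.pi fun _ : Fin 3 => (volume : Measure ℝ).restrict (Set.Icc 0 1))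
      {a | a 0 < k₁ ∧ a 0 < max (a 1) (a 2) ∧ k₂ ≤ a 1 ∧ ∀ i, a i ≤ a 1}
      = ENNReal.ofReal (k₁ / 2 - k₁ ^ 3 / 6 - k₂ ^ 3 / 3) := by
  have hk2 : k₂ ≤ 1 := le_trans h21 h1
  set μ : Measure ℝ := volume.restrict (Set.Icc 0 1) with hμ
  set T : Set (ℝ × ℝ × ℝ) :=
    {p | p.1 < k₁ ∧ p.1 < p.2.1 ∧ k₂ ≤ p.2.1 ∧ p.2.2 ≤ p.2.1} with hT
  have hTmeas : MeasurableSet T := by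
    apply MeasurableSet.inter
    · exact measurableSet_lt measurable_fst measurable_const
    apply MeasurableSet.inter
    · exact measurableSet_lt measurable_fst (measurable_fst.comp measurable_snd)
    apply MeasurableSet.inter
    · exact measurableSet_le measurable_const (measurable_fst.comp measurable_snd)
    · exact measurableSet_le (measurable_snd.comp measurable_snd)
        (measurable_fst.comp measurable_snd)
  have hmp : MeasurePreserving (fun a : Fin 3 → ℝ => (a 0, (a 1, a 2)))
      (Measure.pi fun _ => μ) (μ.prod (μ.prod μ)) := by
    have h3 := ((MeasurePreserving.id μ).prod (measurePreserving_finTwoArrow μ)).comp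
      (measurePreserving_piFinSuccAbove (fun _ : Fin 3 => μ) 0)
    have heq : (Prod.map id (⇑MeasurableEquiv.finTwoArrow)
        ∘ ⇑(MeasurableEquiv.piFinSuccAbove (fun _ : Fin 3 => ℝ) 0))
        = fun a : Fin 3 → ℝ => (a 0, (a 1, a 2)) := by
      funext a
      simp [MeasurableEquiv.piFinSuccAbove, MeasurableEquiv.finTwoArrow, Fin.succAbove]
      exact ⟨rfl, rfl⟩
    rwa [heq] at h3
  have hset : {a : Fin 3 → ℝ | a 0 < k₁ ∧ a 0 < max (a 1) (a 2) ∧ k₂ ≤ a 1 ∧ ∀ i, a i ≤ a 1}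
      = (fun a : Fin 3 → ℝ => (a 0, (a 1, a 2))) ⁻¹' T := by
    ext a
    simp only [hT, Set.mem_setOf_eq, Set.mem_preimage]
    constructor
    · rintro ⟨ha1, ha2, ha3, ha4⟩
      have h02 := ha4 2
      refine ⟨ha1, ?_, ha3, h02⟩
      rcases lt_or_ge (a 0) (a 1) with h | h
      · exact h
      · exact lt_of_lt_of_le ha2 (by simp [max_le (ha4 1) h02])
    · rintro ⟨ha1, ha2, ha3, ha4⟩
      refine ⟨ha1, lt_max_of_lt_left ha2, ha3, ?_⟩
      intro i
      fin_cases i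
      · exact le_of_lt ha2
      · exact le_refl _
      · exact ha4
  rw [hset, hmp.measure_preimage hTmeas.nullMeasurableSet]
  rw [Measure.prod_apply hTmeas]
  -- the inner double measure, for x ∈ [0,1]
  have hIic : ∀ y ∈ Set.Icc (0:ℝ) 1, μ (Set.Iic y) = ENNReal.ofReal y := by
    rintro y ⟨hy0, hy1⟩
    rw [hμ, Measure.restrict_apply measurableSet_Iic]
    have : Set.Iic y ∩ Set.Icc 0 1 = Set.Icc 0 y := by
      ext z
      simp only [Set.mem_inter_iff, Set.mem_Iic, Set.mem_Icc]
      constructor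
      · rintro ⟨h, h2, _⟩; exact ⟨h2, h⟩
      · rintro ⟨h2, h⟩; exact ⟨h, h2, le_trans h hy1⟩
    rw [this, Real.volume_Icc, sub_zero]
  have key : ∀ x ∈ Set.Icc (0:ℝ) 1, (μ.prod μ) (Prod.mk x ⁻¹' T)
      = Set.indicator (Set.Iio k₁)
        (fun x => ENNReal.ofReal ((1 - (max x k₂)^2)/2)) x := by
    rintro x ⟨hx0, hx1⟩
    by_cases hx : x < k₁
    · rw [Set.indicator_of_mem (by exact hx)]
      have hpre : Prod.mk x ⁻¹' T = {q : ℝ × ℝ | x < q.1 ∧ k₂ ≤ q.1 ∧ q.2 ≤ q.1} := by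
        ext q; simp [hT, hx]
      rw [hpre]
      have hQmeas : MeasurableSet {q : ℝ × ℝ | x < q.1 ∧ k₂ ≤ q.1 ∧ q.2 ≤ q.1} := by
        apply MeasurableSet.inter
        · exact measurableSet_lt measurable_const measurable_fst
        apply MeasurableSet.inter
        · exact measurableSet_le measurable_const measurable_fst
        · exact measurableSet_le measurable_snd measurable_fst
      rw [Measure.prod_apply hQmeas]
      -- inner-most integral
      have hS : MeasurableSet {y : ℝ | x < y ∧ k₂ ≤ y} :=
        (measurableSet_Ioi.inter measurableSet_Ici)
      have e1 : ∀ y : ℝ, μ (Prod.mk y ⁻¹' {q : ℝ × ℝ | x < q.1 ∧ k₂ ≤ q.1 ∧ q.2 ≤ q.1})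
          = Set.indicator {y : ℝ | x < y ∧ k₂ ≤ y} (fun y => μ (Set.Iic y)) y := by
        intro y
        rw [Set.indicator_apply]
        by_cases hy : x < y ∧ k₂ ≤ y
        · rw [if_pos (Set.mem_setOf_eq ▸ hy)]
          congr 1
          ext z
          simp [hy.1, hy.2, Set.mem_Iic]
        · rw [if_neg (by simpa using hy)]
          have : Prod.mk y ⁻¹' {q : ℝ × ℝ | x < q.1 ∧ k₂ ≤ q.1 ∧ q.2 ≤ q.1} = ∅ := by
            ext z
            simp only [Set.mem_preimage, Set.mem_setOf_eq, Set.mem_empty_iff_false, iff_false]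
            intro h
            exact hy ⟨h.1, h.2.1⟩
          rw [this, measure_empty]
      simp only [e1]
      have e2 : ∫⁻ y, Set.indicator {y : ℝ | x < y ∧ k₂ ≤ y} (fun y => μ (Set.Iic y)) y ∂μ
          = ∫⁻ y, Set.indicator {y : ℝ | x < y ∧ k₂ ≤ y} ENNReal.ofReal y ∂μ := by
        rw [hμ]
        apply setLIntegral_congr_fun measurableSet_Icc
        intro y hy
        rw [Set.indicator_apply, Set.indicator_apply]
        by_cases hyS : x < y ∧ k₂ ≤ y
        · rw [if_pos (Set.mem_setOf_eq ▸ hyS), if_pos (Set.mem_setOf_eq ▸ hyS), ← hμ, hIic y hy]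
        · rw [if_neg (by simpa using hyS), if_neg (by simpa using hyS)]
      rw [e2, lintegral_indicator hS, hμ, Measure.restrict_restrict hS]
      have hmax1 : max x k₂ ≤ 1 := max_le hx1 hk2
      have hmax0 : 0 ≤ max x k₂ := le_max_of_le_left hx0
      have hval : ∫⁻ y in Set.Ioc (max x k₂) 1, ENNReal.ofReal y
          = ENNReal.ofReal ((1 - (max x k₂)^2)/2) := by
        have h := lint_ofReal_Ioc (max x k₂) 1 hmax1 (fun y => y) continuous_id'
          (fun y hy => le_trans hmax0 (le_of_lt hy.1))
        rw [h, integral_id]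
        norm_num
      rcases le_or_gt k₂ x with hc | hc
      · have hseq : {y : ℝ | x < y ∧ k₂ ≤ y} ∩ Set.Icc 0 1 = Set.Ioc (max x k₂) 1 := by
          ext z
          simp only [Set.mem_inter_iff, Set.mem_setOf_eq, Set.mem_Icc, Set.mem_Ioc,
            max_eq_left hc]
          constructor
          · rintro ⟨⟨h1', h2'⟩, h3', h4'⟩; exact ⟨h1', h4'⟩
          · rintro ⟨h1', h2'⟩; exact ⟨⟨h1', le_trans hc (le_of_lt h1')⟩,
              le_trans hx0 (le_of_lt h1'), h2'⟩
        rw [hseq, hval]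
      · have hseq : {y : ℝ | x < y ∧ k₂ ≤ y} ∩ Set.Icc 0 1 = Set.Icc (max x k₂) 1 := by
          ext z
          simp only [Set.mem_inter_iff, Set.mem_setOf_eq, Set.mem_Icc,
            max_eq_right (le_of_lt hc)]
          constructor
          · rintro ⟨⟨h1', h2'⟩, h3', h4'⟩; exact ⟨h2', h4'⟩
          · rintro ⟨h1', h2'⟩; exact ⟨⟨lt_of_lt_of_le hc h1', h1'⟩,
              le_trans h0 h1', h2'⟩
        rw [hseq, setLIntegral_congr (Ioc_ae_eq_Icc).symm, hval]
    · rw [Set.indicator_of_notMem (by exact hx)]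
      have : Prod.mk x ⁻¹' T = ∅ := by
        ext q
        simp [hT, hx]
      rw [this, measure_empty]
  -- outer integral
  rw [show ∫⁻ x, (μ.prod μ) (Prod.mk x ⁻¹' T) ∂μ
      = ∫⁻ x, Set.indicator (Set.Iio k₁)
          (fun x => ENNReal.ofReal ((1 - (max x k₂)^2)/2)) x ∂μ from by
    rw [hμ]
    exact setLIntegral_congr_fun measurableSet_Icc key]
  rw [lintegral_indicator measurableSet_Iio, hμ,
    Measure.restrict_restrict measurableSet_Iio]
  have hseq : Set.Iio k₁ ∩ Set.Icc 0 1 = Set.Ico 0 k₁ := by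
    ext z
    simp only [Set.mem_inter_iff, Set.mem_Iio, Set.mem_Icc, Set.mem_Ico]
    constructor
    · rintro ⟨h, h2, _⟩; exact ⟨h2, h⟩
    · rintro ⟨h2, h⟩; exact ⟨h, h2, le_trans (le_of_lt h) h1⟩
  rw [hseq, setLIntegral_congr (Ico_ae_eq_Ioc)]
  have hk10 : (0:ℝ) ≤ k₁ := le_trans h0 h21
  rw [lint_ofReal_Ioc 0 k₁ hk10 _ (by continuity) ?_]
  · rw [real_integral_calc k₁ k₂ h0 h21]
  · intro y hy
    have hm1 : max y k₂ ≤ 1 := max_le (le_trans hy.2 h1) hk2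
    have hm0 : 0 ≤ max y k₂ := le_max_of_le_right h0
    nlinarith
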